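/- Let R be a commutative ring additively generated by its units whose Jacobson radical contains the prime p, and let i ≥ 1. Then: (i) {1+ap^i, 1+bp} ∈ V^{i+1} K_2(R) for all a, b ∈ R; (ii) {1+ap^i, −1} ∈ V^{i+1} K_2(R) for all a ∈ R; (iii) ⟨p^{i−1}a, p⟩ and ⟨p^{i−1}, pa⟩ lie in V^i K_2(R) for all a ∈ R. -/

import Mathlib

/-- A ring is additively generated by its units. -/
def AddGenByUnits (R : Type) [CommRing R] : Prop :=
  AddSubgroup.closure {x : R | IsUnit x} = ⊤
/-! ## `K₂` with Dennis–Stein and Steinberg symbols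

Quillen's `K₂` is not available in Mathlib.  We axiomatise the structure actually used:
an abelian group equipped with Dennis–Stein symbols `⟨a,b⟩` (older sign convention) and
Steinberg symbols `{a,b}` satisfying the relations (D1)–(D5), bilinearity and the
Steinberg relation. -/

structure DennisSteinK2 (R : Type) [CommRing R] where
  K2 : Type
  [grp : AddCommGroup K2]
  /-- the Dennis–Stein symbol `⟨a,b⟩` (meaningful when `1 + ab` is a unit) -/
  ds : R → R → K2
  /-- the Steinberg symbol `{a,b}` -/
  st : Rˣ → Rˣ → K2
  D1 : ∀ a b : R, IsUnit (1 + a * b) → ds a b = - ds (-b) (-a)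
  D2 : ∀ a b c : R, IsUnit (1 + a * b) → IsUnit (1 + a * c) →
    ds a b + ds a c = ds a (b + c + a * b * c)
  D3 : ∀ a b c : R, IsUnit (1 + a * b * c) → ds a (b * c) = ds (a * b) c + ds (a * c) b
  /-- (D4): `⟨a,b⟩ = {1+ab, b}` when `b` and `1+ab` are units -/
  D4 : ∀ (a : R) (b u : Rˣ), (u : R) = 1 + a * b → ds a (b : R) = st u b
  /-- (D5): `⟨a,b⟩ = {−(1+a)/(1−b), (1+ab)/(1−b)}` when `1+a`, `1−b`, `1+ab` are units -/
  D5 : ∀ (a b : R) (x y : Rˣ), IsUnit (1 - b) → (x : R) * (1 - b) = -(1 + a) →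
    (y : R) * (1 - b) = 1 + a * b → ds a b = st x y
  st_mul_left : ∀ a a' b : Rˣ, st (a * a') b = st a b + st a' b
  st_mul_right : ∀ a b b' : Rˣ, st a (b * b') = st a b + st a b'
  steinberg : ∀ a b : Rˣ, (a : R) + (b : R) = 1 → st a b = 0

attribute [instance] DennisSteinK2.grp

/-- The unit filtration `U^i K₂(R)`: the subgroup generated by Steinberg symbols `{a,b}`
with `a` or `b` in `1 + pⁱR`. -/
def DennisSteinK2.U {R : Type} [CommRing R] (K : DennisSteinK2 R) (p i : ℕ) :
    AddSubgroup K.K2 :=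
  AddSubgroup.closure
    {z | ∃ a b : Rˣ, ((∃ c : R, (a : R) = 1 + (p : R) ^ i * c) ∨
      (∃ c : R, (b : R) = 1 + (p : R) ^ i * c)) ∧ z = K.st a b}

/-- The modified filtration `V^i K₂(R)`: it agrees with `U^i K₂(R)` except when `p = 2` and
`i = 2`, where the Dennis–Stein symbols `⟨2c,2⟩` are added. -/
def DennisSteinK2.V {R : Type} [CommRing R] (K : DennisSteinK2 R) (p i : ℕ) :
    AddSubgroup K.K2 :=
  if p = 2 ∧ i = 2 then
    K.U p 2 ⊔ AddSubgroup.closure {z | ∃ c : R, z = K.ds ((p : R) * c) (p : R)}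
  else K.U p i
/-!
## Statement 14

Let `R` be a commutative ring additively generated by its units, with `p` in the Jacobson
radical, and `i ≥ 1`.  Then (i) `{1+apⁱ, 1+bp} ∈ V^{i+1} K₂(R)`;
(ii) `{1+apⁱ, −1} ∈ V^{i+1} K₂(R)`; (iii) `⟨pⁱ⁻¹a, p⟩, ⟨pⁱ⁻¹, pa⟩ ∈ V^i K₂(R)`.
-/

namespace DSAux

variable {p : ℕ} {R : Type} [CommRing R]

lemma isU (hjac : (p : R) ∈ Ideal.jacobson (⊥ : Ideal R)) {k : ℕ} (hk : 1 ≤ k) (e : R)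
    {a : R} (h : a = 1 + (p:R)^k * e) : IsUnit a := by
  obtain ⟨m, rfl⟩ : ∃ m, k = m + 1 := ⟨k - 1, by omega⟩
  have h2 := (Ideal.mem_jacobson_bot.mp hjac) ((p:R)^m * e)
  have h3 : a = (p:R) * ((p:R)^m * e) + 1 := by rw [h]; ring
  rw [h3]; exact h2

lemma memU_left (K : DennisSteinK2 R) {i : ℕ} {a : Rˣ} (b : Rˣ) (c : R)
    (h : (a : R) = 1 + (p:R)^i * c) : K.st a b ∈ K.U p i :=
  AddSubgroup.subset_closure ⟨a, b, Or.inl ⟨c, h⟩, rfl⟩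

lemma memU_right (K : DennisSteinK2 R) {i : ℕ} (a : Rˣ) {b : Rˣ} (c : R)
    (h : (b : R) = 1 + (p:R)^i * c) : K.st a b ∈ K.U p i :=
  AddSubgroup.subset_closure ⟨a, b, Or.inr ⟨c, h⟩, rfl⟩

lemma Umono (K : DennisSteinK2 R) {i j : ℕ} (hij : i ≤ j) : K.U p j ≤ K.U p i := by
  rw [DennisSteinK2.U, AddSubgroup.closure_le]
  rintro z ⟨a, b, (⟨c, hc⟩ | ⟨c, hc⟩), rfl⟩
  · exact memU_left _ _ ((p:R)^(j-i) * c)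
      (by rw [hc, ← mul_assoc, ← pow_add, Nat.add_sub_cancel' hij])
  · exact memU_right _ _ ((p:R)^(j-i) * c)
      (by rw [hc, ← mul_assoc, ← pow_add, Nat.add_sub_cancel' hij])

lemma UleV (K : DennisSteinK2 R) (i : ℕ) : K.U p i ≤ K.V p i := by
  by_cases h : p = 2 ∧ i = 2
  · rw [DennisSteinK2.V, if_pos h]
    obtain ⟨h1, h2⟩ := h; subst h2; exact le_sup_left
  · rw [DennisSteinK2.V, if_neg h]

variable (K : DennisSteinK2 R)

lemma st_one_right (a : Rˣ) : K.st a 1 = 0 := by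
  have h := K.st_mul_right a 1 1
  rw [mul_one] at h
  exact left_eq_add.mp h

lemma st_one_left (b : Rˣ) : K.st 1 b = 0 := by
  have h := K.st_mul_left 1 1 b
  rw [mul_one] at h
  exact left_eq_add.mp h

lemma st_inv_right (a b : Rˣ) : K.st a b⁻¹ = - K.st a b := by
  have h := K.st_mul_right a b b⁻¹
  rw [mul_inv_cancel, st_one_right] at h
  exact eq_neg_of_add_eq_zero_right h.symm

lemma st_inv_left (a b : Rˣ) : K.st a⁻¹ b = - K.st a b := by
  have h := K.st_mul_left a a⁻¹ b
  rw [mul_inv_cancel, st_one_left] at h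
  exact eq_neg_of_add_eq_zero_right h.symm

lemma st_pow_left (n : ℕ) (a b : Rˣ) : K.st (a^n) b = n • K.st a b := by
  induction n with
  | zero => simp [st_one_left]
  | succ n ih => rw [pow_succ, K.st_mul_left, ih, succ_nsmul]

lemma st_pow_right (n : ℕ) (a b : Rˣ) : K.st a (b^n) = n • K.st a b := by
  induction n with
  | zero => simp [st_one_right]
  | succ n ih => rw [pow_succ, K.st_mul_right, ih, succ_nsmul]

lemma ds_zero_right (a : R) : K.ds a 0 = 0 := by
  have h := K.D2 a 0 0 (by simpa using isUnit_one) (by simpa using isUnit_one)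
  simp only [add_zero, zero_add, mul_zero] at h
  have h2 : K.ds a 0 + K.ds a 0 = K.ds a 0 + 0 := by rw [add_zero]; exact h
  exact add_left_cancel h2

lemma ds_zero_left (b : R) : K.ds 0 b = 0 := by
  have h := K.D1 0 b (by simpa using isUnit_one)
  rw [neg_zero, ds_zero_right] at h
  simpa using h

lemma ds_add_left {a b c : R} (h1 : IsUnit (1 + a*c)) (h2 : IsUnit (1 + b*c)) :
    K.ds a c + K.ds b c = K.ds (a + b + a*b*c) c := by
  have hD2 := K.D2 (-c) (-a) (-b) (by rw [show (1:R) + -c * -a = 1 + a*c from by ring]; exact h1)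
    (by rw [show (1:R) + -c * -b = 1 + b*c from by ring]; exact h2)
  have e3 : -a + -b + -c * -a * -b = -(a + b + a*b*c) := by ring
  rw [e3] at hD2
  rw [K.D1 a c h1, K.D1 b c h2, K.D1 (a+b+a*b*c) c
    (by rw [show (1:R)+(a+b+a*b*c)*c = (1+a*c)*(1+b*c) from by ring]; exact h1.mul h2)]
  rw [← hD2]; abel

end DSAux

namespace DSAux

variable {p : ℕ} {R : Type} [CommRing R]

lemma dsB (hjac : (p : R) ∈ Ideal.jacobson (⊥ : Ideal R)) (hgen : AddGenByUnits R)
    (K : DennisSteinK2 R) {k : ℕ} (hk : 1 ≤ k) (e y : R)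
    {a : R} (ha : a = (p:R)^k * e) : K.ds a y ∈ K.U p k := by
  subst ha
  have hgen' : AddSubgroup.closure {x : R | IsUnit x} = ⊤ := hgen
  have hy : y ∈ AddSubgroup.closure {x : R | IsUnit x} := by rw [hgen']; trivial
  have main : ∀ w : Rˣ, K.ds ((p:R)^k * e) (y * w) ∈ K.U p k := by
    induction hy using AddSubgroup.closure_induction with
    | mem x hx =>
      intro w
      obtain ⟨ux, hux⟩ := hx
      obtain ⟨U, hU⟩ : IsUnit (1 + (p:R)^k*e*(x*(w:R))) := isU hjac hk (e*(x*(w:R))) (by ring)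
      have hx' : x * (w:R) = ((ux * w : Rˣ) : R) := by rw [Units.val_mul, hux]
      rw [hx', K.D4 ((p:R)^k*e) (ux*w) U (by rw [hU, hx'])]
      exact memU_left K _ (e * ((ux*w : Rˣ):R)) (by rw [hU, hx']; ring)
    | zero =>
      intro w
      rw [zero_mul, ds_zero_right]
      exact zero_mem _
    | add x z hx hz ihx ihz =>
      intro w
      obtain ⟨v, hv⟩ : IsUnit (1 + (p:R)^k*e*(x*(w:R))) := isU hjac hk (e*(x*(w:R))) (by ring)
      have key := K.D2 ((p:R)^k*e) (x*(w:R)) (z*((w*v⁻¹ : Rˣ):R))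
        (by rw [← hv]; exact v.isUnit)
        (isU hjac hk (e*(z*((w*v⁻¹:Rˣ):R))) (by ring))
      have harg : x*(w:R) + z*((w*v⁻¹:Rˣ):R) + (p:R)^k*e*(x*(w:R))*(z*((w*v⁻¹:Rˣ):R))
          = (x+z)*(w:R) := by
        have h1 : ((w*v⁻¹:Rˣ):R) = (w:R) * ((v⁻¹:Rˣ):R) := Units.val_mul w v⁻¹
        have h2 : ((v⁻¹:Rˣ):R) * (1 + (p:R)^k*e*(x*(w:R))) = 1 := by
          rw [← hv]; exact Units.inv_mul v
        rw [h1]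
        linear_combination (z*(w:R)) * h2
      rw [harg] at key
      rw [← key]
      exact add_mem (ihx w) (ihz (w*v⁻¹))
    | neg x hx ih =>
      intro w
      have h1 : (-x)*(w:R) = x*((-w : Rˣ):R) := by rw [Units.val_neg]; ring
      rw [h1]
      exact ih (-w)
  have h := main 1
  simpa using h

lemma dsB' (hjac : (p : R) ∈ Ideal.jacobson (⊥ : Ideal R)) (hgen : AddGenByUnits R)
    (K : DennisSteinK2 R) {k : ℕ} (hk : 1 ≤ k) (e y : R)
    {b : R} (hb : b = (p:R)^k * e) : K.ds y b ∈ K.U p k := by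
  have hu : IsUnit (1 + y * b) := isU hjac hk (y*e) (by rw [hb]; ring)
  rw [K.D1 y b hu]
  exact neg_mem (dsB hjac hgen K hk (-e) (-y) (by rw [hb]; ring))

lemma dsLadd (hjac : (p : R) ∈ Ideal.jacobson (⊥ : Ideal R)) (hgen : AddGenByUnits R)
    (K : DennisSteinK2 R) (n : ℕ) (x y : R) :
    K.ds ((p:R)^n*x + (p:R)^(n+1)*y) (p:R) - K.ds ((p:R)^n*x) (p:R) ∈ K.U p (n+1) := by
  obtain ⟨v, hv⟩ : IsUnit (1 + ((p:R)^n*x)*(p:R)) := isU hjac (show (1:ℕ) ≤ n+1 by omega) x (by ring)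
  have h2 := ds_add_left K (a := (p:R)^n*x) (b := (p:R)^(n+1)*(y*((v⁻¹:Rˣ):R))) (c := (p:R))
    (by rw [← hv]; exact v.isUnit)
    (isU hjac (show 1 ≤ n+1 by omega) (y*((v⁻¹:Rˣ):R)*(p:R)) (by ring))
  have h3 : ((v⁻¹:Rˣ):R) * (1 + ((p:R)^n*x)*(p:R)) = 1 := by rw [← hv]; exact Units.inv_mul v
  have harg : (p:R)^n*x + (p:R)^(n+1)*(y*((v⁻¹:Rˣ):R))
      + ((p:R)^n*x)*((p:R)^(n+1)*(y*((v⁻¹:Rˣ):R)))*(p:R) = (p:R)^n*x + (p:R)^(n+1)*y := by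
    linear_combination ((p:R)^(n+1)*y) * h3
  rw [harg] at h2
  have h4 : K.ds ((p:R)^n*x + (p:R)^(n+1)*y) (p:R) - K.ds ((p:R)^n*x) (p:R)
      = K.ds ((p:R)^(n+1)*(y*((v⁻¹:Rˣ):R))) (p:R) := by rw [← h2]; abel
  rw [h4]
  exact dsB hjac hgen K (by omega) (y*((v⁻¹:Rˣ):R)) (p:R) rfl

lemma stM2 (hjac : (p : R) ∈ Ideal.jacobson (⊥ : Ideal R)) (K : DennisSteinK2 R)
    {j k : ℕ} (hj : 1 ≤ j) (hk : 1 ≤ k) (x y : R) (α β : Rˣ)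
    (hα : (α:R) = 1 + (p:R)^j*x) (hβ : (β:R) = 1 - (p:R)^k*y) :
    K.ds ((p:R)^j*x) ((p:R)^k*y) + K.st α β ∈ K.U p (j+k) := by
  have key : ∀ (x' : R) (α' : Rˣ), (α':R) = 1 + (p:R)^j*x' →
      ∃ γ : Rˣ, ((γ:R) = 1 + (p:R)^(j+k)*(x'*y) ∧
        K.ds ((p:R)^j*x') ((p:R)^k*y) =
          K.st (-α') γ + (- K.st (-α') β) + (K.st β⁻¹ γ + K.st β β)) := by
    intro x' α' hα'
    obtain ⟨γ, hγ⟩ : IsUnit (1 + (p:R)^(j+k)*(x'*y)) := isU hjac (by omega) (x'*y) rfl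
    refine ⟨γ, hγ, ?_⟩
    have hβu : IsUnit ((1:R) - (p:R)^k*y) := by rw [← hβ]; exact β.isUnit
    have hD5 := K.D5 ((p:R)^j*x') ((p:R)^k*y) ((-α')*β⁻¹) (γ*β⁻¹) hβu
      (by rw [Units.val_mul, Units.val_neg, ← hβ, mul_assoc, Units.inv_mul, mul_one, hα'])
      (by rw [Units.val_mul, ← hβ, mul_assoc, Units.inv_mul, mul_one, hγ, pow_add]; ring)
    rw [hD5, K.st_mul_left, K.st_mul_right, K.st_mul_right, st_inv_right K (-α') β,
      st_inv_left K β γ, st_inv_left K β β⁻¹, st_inv_right K β β]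
    abel
  obtain ⟨γ₀, hγ₀, h0⟩ := key 0 1 (by simp)
  obtain ⟨γ₁, hγ₁, h1⟩ := key x α hα
  have hγ₀1 : γ₀ = 1 := Units.ext (by rw [hγ₀]; simp)
  rw [hγ₀1] at h0
  simp only [mul_zero, ds_zero_left K, st_one_right K] at h0
  -- h0 : 0 = 0 + - st (-1) β + (0 + st β β)  (roughly)
  have hββ : K.st ((-1:Rˣ)) β = K.st β β := by
    have h0' : (0:K.K2) = - K.st (-(1:Rˣ)) β + K.st β β := by rw [h0]; abel
    exact neg_add_eq_zero.mp h0'.symm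
  have hsplit : K.st (-α) β = K.st (-1) β + K.st α β := by
    have e : (-1 : Rˣ)*α = -α := Units.ext (by simp)
    rw [← e, K.st_mul_left]
  have hfin : K.ds ((p:R)^j*x) ((p:R)^k*y) + K.st α β = K.st (-α) γ₁ + K.st β⁻¹ γ₁ := by
    rw [h1, hsplit, hββ]; abel
  rw [hfin]
  exact add_mem (memU_right K _ (x*y) hγ₁) (memU_right K _ (x*y) hγ₁)

lemma binomial {q : ℕ} (hq : q.Prime) {S : Type} [CommRing S] (t : S) :
    ∃ g : S, (1 + t)^q = 1 + (q:S)*t + t^q + (q:S)*t^2*g := by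
  obtain ⟨m, rfl⟩ : ∃ m, q = m + 2 := ⟨q - 2, by have := hq.two_le; omega⟩
  have h := add_pow t 1 (m+2)
  rw [add_comm t 1] at h
  simp only [one_pow, mul_one] at h
  rw [Finset.sum_range_succ, Finset.sum_range_succ', Finset.sum_range_succ'] at h
  refine ⟨∑ k ∈ Finset.range m, (((m+2).choose (k+2) / (m+2) : ℕ) : S) * t^k, ?_⟩
  have hmid : ∑ k ∈ Finset.range m, t^(k+1+1) * (((m+2).choose (k+1+1) : ℕ) : S)
      = ((m+2:ℕ):S)*t^2*(∑ k ∈ Finset.range m, (((m+2).choose (k+2) / (m+2) : ℕ) : S) * t^k) := by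
    rw [Finset.mul_sum]
    refine Finset.sum_congr rfl ?_
    intro k hk
    have hkm : k < m := Finset.mem_range.mp hk
    have hdvd : (m+2) ∣ (m+2).choose (k+2) := hq.dvd_choose_self (by omega) (by omega)
    obtain ⟨c, hc⟩ := hdvd
    rw [hc, Nat.mul_div_cancel_left c (by omega : 0 < m+2)]
    push_cast
    ring
  rw [h, hmid]
  simp only [zero_add, Nat.choose_one_right, Nat.choose_zero_right, Nat.choose_self, pow_zero]
  push_cast
  ring

end DSAux

namespace DSAux

variable {p : ℕ} {R : Type} [CommRing R]

lemma Gmain (hp : p.Prime) (hjac : (p : R) ∈ Ideal.jacobson (⊥ : Ideal R))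
    (hgen : AddGenByUnits R) (K : DennisSteinK2 R) :
    ∀ i : ℕ, 1 ≤ i → ∀ x : R, K.ds ((p:R)^(i-1)*x) ((p:R)) ∈ K.V p i := by
  intro i hi x
  obtain ⟨n, rfl⟩ : ∃ n, i = n + 1 := ⟨i - 1, by omega⟩
  simp only [Nat.add_sub_cancel]
  cases n with
  | zero =>
    rw [DennisSteinK2.V, if_neg (by omega)]
    exact dsB' hjac hgen K (le_refl 1) 1 ((p:R)^0*x) (by ring)
  | succ m =>
    by_cases hc : p = 2 ∧ m + 1 + 1 = 2
    · obtain ⟨hp2, hm⟩ := hc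
      have hm0 : m = 0 := by omega
      subst hm0
      rw [DennisSteinK2.V, if_pos ⟨hp2, rfl⟩]
      exact AddSubgroup.mem_sup_right (AddSubgroup.subset_closure ⟨x, by norm_num⟩)
    · rw [DennisSteinK2.V, if_neg hc]
      by_cases hdvd : p ∣ (m + 2)
      · -- CASE B : p ∣ i, i ≥ 3
        have hm1 : 1 ≤ m := by
          by_contra hcon
          have hm0 : m = 0 := by omega
          subst hm0
          exact hc ⟨(Nat.prime_dvd_prime_iff_eq hp Nat.prime_two).mp hdvd, rfl⟩
        have hpowge : m + 2 ≤ p * m := by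
          obtain ⟨t, ht⟩ := hdvd
          rcases eq_or_ne p 2 with h2 | h2
          · subst h2; omega
          · have h3 : 3 ≤ p := by have := hp.two_le; omega
            calc m + 2 ≤ 3*m := by omega
              _ ≤ p*m := Nat.mul_le_mul_right m h3
        obtain ⟨α₁, hα₁⟩ : IsUnit ((1:R) + (p:R)^(m+1)*x) :=
          isU hjac (show (1:ℕ) ≤ m+1 by omega) x rfl
        obtain ⟨β₁, hβ₁⟩ : IsUnit ((1:R) - (p:R)^1*1) :=
          isU hjac (le_refl 1) (-1 : R) (by ring)
        obtain ⟨β₂, hβ₂⟩ : IsUnit ((1:R) + (p:R)^m*x) := isU hjac hm1 x rfl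
        have step1 := stM2 hjac K (j := m+1) (k := 1) (by omega) (le_refl 1) x 1 α₁ β₁ hα₁ hβ₁
        rw [show (p:R)^1*(1:R) = (p:R) from by ring] at step1
        -- step1 : K.ds ((p:R)^(m+1)*x) (p:R) + K.st α₁ β₁ ∈ K.U p (m+1+1)
        obtain ⟨g, hg⟩ := binomial hp ((p:R)^m*x)
        set s : R := (p:R)^(p*m-(m+2))*x^p + (p:R)^(m-1)*x^2*g with hs_def
        have hpow : ((β₂^p : Rˣ) : R) = (α₁ : R) + (p:R)^(m+2)*s := by
          rw [Units.val_pow_eq_pow_val, hβ₂, hg, hα₁, hs_def]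
          have e1 : ((p:R)^m*x)^p = (p:R)^(m+2)*((p:R)^(p*m-(m+2))*x^p) := by
            have hD : m*p = (m+2) + (p*m - (m+2)) := by rw [Nat.mul_comm]; omega
            rw [mul_pow, ← pow_mul, hD, pow_add]; ring
          have e2 : (p:R)*((p:R)^m*x)^2*g = (p:R)^(m+2)*((p:R)^(m-1)*x^2*g) := by
            have h5 : (p:R)*(p:R)^(m*2) = (p:R)^(m+2)*(p:R)^(m-1) := by
              rw [← pow_succ', ← pow_add, show m*2+1 = (m+2)+(m-1) from by omega]
            calc (p:R)*((p:R)^m*x)^2*g = ((p:R)*(p:R)^(m*2))*(x^2*g) := by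
                  rw [mul_pow, ← pow_mul]; ring
              _ = ((p:R)^(m+2)*(p:R)^(m-1))*(x^2*g) := by rw [h5]
              _ = (p:R)^(m+2)*((p:R)^(m-1)*x^2*g) := by ring
          rw [e1, e2]; ring
        obtain ⟨ha1i, ha1spec⟩ : ∃ w : Rˣ, (w:R) = ((α₁⁻¹ : Rˣ):R) := ⟨α₁⁻¹, rfl⟩
        have hε : ((α₁⁻¹ * β₂^p : Rˣ) : R) = 1 + (p:R)^(m+2)*(s*((α₁⁻¹:Rˣ):R)) := by
          rw [Units.val_mul, hpow]
          have h6 : ((α₁⁻¹:Rˣ):R)*(α₁:R) = 1 := Units.inv_mul α₁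
          linear_combination h6
        have hsplit : K.st (β₂^p) β₁ = K.st α₁ β₁ + K.st (α₁⁻¹ * β₂^p) β₁ := by
          have e : β₂^p = α₁ * (α₁⁻¹ * β₂^p) := by rw [← mul_assoc, mul_inv_cancel, one_mul]
          rw [e, K.st_mul_left]
          rw [← e]
        have hmemε : K.st (α₁⁻¹ * β₂^p) β₁ ∈ K.U p (m+2) :=
          memU_left K β₁ (s*((α₁⁻¹:Rˣ):R)) hε
        have hεstep : K.st α₁ β₁ + K.st (α₁⁻¹ * β₂^p) β₁ = K.st β₂ (β₁^p) := by
          rw [← hsplit, st_pow_left K p β₂ β₁, ← st_pow_right K p β₂ β₁]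
        rcases eq_or_ne p 2 with hp2 | hp2
        · -- p = 2 : β₁^2 = 1
          have hβ₁1 : β₁^p = 1 := by
            apply Units.ext
            rw [Units.val_pow_eq_pow_val, hβ₁, Units.val_one, hp2]
            norm_num
          have h7 : K.st α₁ β₁ ∈ K.U p (m+2) := by
            have h8 := hεstep
            rw [hβ₁1, st_one_right] at h8
            have h9 : K.st α₁ β₁ = - K.st (α₁⁻¹ * β₂^p) β₁ := eq_neg_of_add_eq_zero_left h8
            rw [h9]; exact neg_mem hmemε
          have h10 := (K.U p (m+2)).sub_mem step1 h7
          rwa [add_sub_cancel_right] at h10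
        · -- p odd
          have hodd : Odd p := hp.odd_of_ne_two hp2
          have h3p : 3 ≤ p := by have := hp.two_le; omega
          obtain ⟨gz, hgz⟩ := binomial hp (-(p:ℤ))
          set w₀ : ℤ := 1 + (p:ℤ)^(p-2) - (p:ℤ)*gz with hw₀
          have hz : ((1:ℤ) - (p:ℤ))^p = 1 - (p:ℤ)^2*w₀ := by
            have hnp : (-(p:ℤ))^p = -(p:ℤ)^p := hodd.neg_pow _
            have hpp : (p:ℤ)^p = (p:ℤ)^2*(p:ℤ)^(p-2) := by
              rw [← pow_add, show 2+(p-2) = p from by omega]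
            rw [show (1:ℤ) - (p:ℤ) = 1 + -(p:ℤ) from by ring, hgz, hnp, hpp, hw₀]; ring
          obtain ⟨m₀, hm₀⟩ : ∃ m₀ : ℤ, w₀ = 1 + (p:ℤ)*m₀ := by
            refine ⟨(p:ℤ)^(p-3) - gz, ?_⟩
            rw [hw₀, show (p:ℤ)^(p-2) = (p:ℤ)*(p:ℤ)^(p-3) from by
              rw [← pow_succ', show p-3+1 = p-2 from by omega]]
            ring
          have hβ₁p : ((β₁^p : Rˣ) : R) = 1 - (p:R)^2*((w₀:ℤ):R) := by
            rw [Units.val_pow_eq_pow_val, hβ₁]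
            calc ((1:R) - (p:R)^1*1)^p = ((((1:ℤ) - (p:ℤ))^p : ℤ) : R) := by push_cast; ring
              _ = 1 - (p:R)^2*((w₀:ℤ):R) := by rw [hz]; push_cast; ring
          have step2 := stM2 hjac K (j := m) (k := 2) hm1 (by omega) x ((w₀:ℤ):R) β₂ (β₁^p)
            hβ₂ hβ₁p
          -- step2 : ds (p^m x)(p^2 * w) + st β₂ (β₁^p) ∈ U p (m+2)
          have hD3a := K.D3 ((p:R)^m*x) (p:R) ((p:R)*((w₀:ℤ):R))
            (isU hjac (show (1:ℕ) ≤ m+2 by omega) (x*((w₀:ℤ):R)) (by ring))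
          have hD3b := K.D3 ((p:R)^(m+1)*x) (p:R) ((w₀:ℤ):R)
            (isU hjac (show (1:ℕ) ≤ m+2 by omega) (x*((w₀:ℤ):R)) (by ring))
          rw [show ((p:R)^m*x)*(p:R) = (p:R)^(m+1)*x from by ring,
            show ((p:R)^m*x)*((p:R)*((w₀:ℤ):R)) = (p:R)^(m+1)*(x*((w₀:ℤ):R)) from by ring]
            at hD3a
          rw [show ((p:R)^(m+1)*x)*(p:R) = (p:R)^(m+2)*x from by ring,
            show ((p:R)^(m+1)*x)*((w₀:ℤ):R) = (p:R)^(m+1)*(x*((w₀:ℤ):R)) from by ring]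
            at hD3b
          have eq2 : K.ds ((p:R)^m*x) ((p:R)^2*((w₀:ℤ):R)) =
              K.ds ((p:R)^(m+2)*x) ((w₀:ℤ):R) + K.ds ((p:R)^(m+1)*(x*((w₀:ℤ):R))) (p:R)
                + K.ds ((p:R)^(m+1)*(x*((w₀:ℤ):R))) (p:R) := by
            rw [show (p:R)^2*((w₀:ℤ):R) = (p:R)*((p:R)*((w₀:ℤ):R)) from by ring, hD3a, hD3b]
          have A3 : K.ds ((p:R)^(m+2)*x) ((w₀:ℤ):R) ∈ K.U p (m+2) :=
            dsB hjac hgen K (show (1:ℕ) ≤ m+2 by omega) x ((w₀:ℤ):R) rfl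
          have A4 : K.ds ((p:R)^(m+1)*(x*((w₀:ℤ):R))) (p:R)
              - K.ds ((p:R)^(m+1)*x) (p:R) ∈ K.U p (m+2) := by
            have h := dsLadd hjac hgen K (m+1) x (x*((m₀:ℤ):R))
            have harg : (p:R)^(m+1)*(x*((w₀:ℤ):R))
                = (p:R)^(m+1)*x + (p:R)^(m+1+1)*(x*((m₀:ℤ):R)) := by
              rw [hm₀]; push_cast; ring
            rw [← harg] at h
            exact h
          have hneg : -(K.ds ((p:R)^(m+1)*x) (p:R)) =
              ((K.ds ((p:R)^(m+1)*x) (p:R) + K.st α₁ β₁) + K.st (α₁⁻¹ * β₂^p) β₁)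
              - (K.ds ((p:R)^m*x) ((p:R)^2*((w₀:ℤ):R)) + K.st β₂ (β₁^p))
              + K.ds ((p:R)^(m+2)*x) ((w₀:ℤ):R)
              + (K.ds ((p:R)^(m+1)*(x*((w₀:ℤ):R))) (p:R) - K.ds ((p:R)^(m+1)*x) (p:R))
              + (K.ds ((p:R)^(m+1)*(x*((w₀:ℤ):R))) (p:R) - K.ds ((p:R)^(m+1)*x) (p:R)) := by
            rw [← hεstep, eq2]; abel
          have hnegmem : -(K.ds ((p:R)^(m+1)*x) (p:R)) ∈ K.U p (m+2) := by
            rw [hneg]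
            exact add_mem (add_mem (add_mem (sub_mem (add_mem step1 hmemε) step2) A3) A4) A4
          exact neg_mem_iff.mp hnegmem
      · -- CASE A : ¬ p ∣ (m+2)
        have claim_p : (p:ℤ) • K.ds ((p:R)^(m+1)*x) (p:R) ∈ K.U p (m+2) := by
          set c : R := (p:R)^(m+1)*x with hc_def
          set s : ℕ → R := fun q => Nat.rec (0:R) (fun _ prev => (p:R) + prev*(1 + c*(p:R))) q
            with hs_def
          have hs0 : s 0 = 0 := rfl
          have hsS : ∀ q, s (q+1) = (p:R) + s q * (1 + c*(p:R)) := fun q => rfl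
          have hrec : ∀ q : ℕ, (q:ℤ) • K.ds c (p:R) = K.ds c (s q) := by
            intro q
            induction q with
            | zero => simp [hs0, ds_zero_right]
            | succ q ih =>
              have hD2 := K.D2 c (s q) (p:R)
                (isU hjac (show (1:ℕ) ≤ m+1 by omega) (x * s q) (by rw [hc_def]; ring))
                (isU hjac (show (1:ℕ) ≤ m+2 by omega) x (by rw [hc_def]; ring))
              have harg : s q + (p:R) + c * s q * (p:R) = s (q+1) := by rw [hsS]; ring
              rw [harg] at hD2
              push_cast
              rw [add_smul, one_smul, ih, hD2]
          have hpoly : ∀ q : ℕ, ∃ e : R, s q = (q:R)*(p:R) + c*(p:R)^2*e := by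
            intro q
            induction q with
            | zero => exact ⟨0, by simp [hs0]⟩
            | succ q ih =>
              obtain ⟨e, he⟩ := ih
              refine ⟨e + (q:R) + c*(p:R)*e, ?_⟩
              rw [hsS, he]; push_cast; ring
          obtain ⟨e, he⟩ := hpoly p
          rw [hrec p]
          have hsp : s p = (p:R) * ((p:R) + c*(p:R)*e) := by rw [he]; ring
          rw [hsp]
          have hD3 := K.D3 c (p:R) ((p:R) + c*(p:R)*e)
            (isU hjac (show (1:ℕ) ≤ m+1 by omega) (x*((p:R)*((p:R) + c*(p:R)*e)))
              (by rw [hc_def]; ring))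
          rw [hD3]
          refine add_mem ?_ ?_
          · exact dsB hjac hgen K (show (1:ℕ) ≤ m+2 by omega) x _ (by rw [hc_def]; ring)
          · exact dsB hjac hgen K (show (1:ℕ) ≤ m+2 by omega) (x*(1 + c*e)) (p:R)
              (by rw [hc_def]; ring)
        have claim_i : ∀ b a : ℕ, a + b = m + 2 →
            K.ds ((p:R)^a*x) ((p:R)^b) - (b:ℤ) • K.ds ((p:R)^(m+1)*x) (p:R) ∈ K.U p (m+2) := by
          intro b
          induction b with
          | zero =>
            intro a ha
            have ha' : a = m+2 := by omega
            subst ha'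
            simpa using dsB hjac hgen K (show (1:ℕ) ≤ m+2 by omega) x 1 rfl
          | succ b ih =>
            intro a ha
            have hD3 := K.D3 ((p:R)^a*x) (p:R) ((p:R)^b)
              (isU hjac (show (1:ℕ) ≤ m+2 by omega) x
                (by rw [show m+2 = a+(b+1) from by omega]; ring))
            have e2 : ((p:R)^a*x)*(p:R) = (p:R)^(a+1)*x := by ring
            have e3 : ((p:R)^a*x)*((p:R)^b) = (p:R)^(m+1)*x := by
              rw [show m+1 = a+b from by omega]; ring
            rw [e2, e3] at hD3
            rw [pow_succ' (p:R) b, hD3]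
            have hmem := ih (a+1) (by omega)
            have heq : K.ds ((p:R)^(a+1)*x) ((p:R)^b) + K.ds ((p:R)^(m+1)*x) (p:R)
                - ((b:ℤ)+1) • K.ds ((p:R)^(m+1)*x) (p:R)
                = K.ds ((p:R)^(a+1)*x) ((p:R)^b) - (b:ℤ) • K.ds ((p:R)^(m+1)*x) (p:R) := by
              rw [add_smul, one_smul]; abel
            push_cast
            rw [heq]
            exact hmem
        have claim_i2 : ((m+2:ℕ):ℤ) • K.ds ((p:R)^(m+1)*x) (p:R) ∈ K.U p (m+2) := by
          have h := claim_i (m+2) 0 (by omega)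
          have h2 : K.ds ((p:R)^0*x) ((p:R)^(m+2)) ∈ K.U p (m+2) :=
            dsB' hjac hgen K (show (1:ℕ) ≤ m+2 by omega) 1 ((p:R)^0*x) (by ring)
          have h3 := (K.U p (m+2)).sub_mem h2 h
          have heq : K.ds ((p:R)^0*x) ((p:R)^(m+2))
              - (K.ds ((p:R)^0*x) ((p:R)^(m+2)) - ((m+2:ℕ):ℤ) • K.ds ((p:R)^(m+1)*x) (p:R))
              = ((m+2:ℕ):ℤ) • K.ds ((p:R)^(m+1)*x) (p:R) := by abel
          rwa [heq] at h3
        have hcop : IsCoprime (p:ℤ) ((m+2:ℕ):ℤ) := by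
          rw [Nat.isCoprime_iff_coprime]
          exact (Nat.Prime.coprime_iff_not_dvd hp).mpr hdvd
        obtain ⟨u, v, huv⟩ := hcop
        have hdecomp : K.ds ((p:R)^(m+1)*x) (p:R) =
            u • ((p:ℤ) • K.ds ((p:R)^(m+1)*x) (p:R))
            + v • (((m+2:ℕ):ℤ) • K.ds ((p:R)^(m+1)*x) (p:R)) := by
          rw [smul_smul, smul_smul, ← add_smul, huv, one_smul]
        rw [hdecomp]
        exact add_mem ((K.U p (m+2)).zsmul_mem claim_p u) ((K.U p (m+2)).zsmul_mem claim_i2 v)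

end DSAux

namespace DSAux

variable {p : ℕ} {R : Type} [CommRing R]

lemma dsPP (hp : p.Prime) (hjac : (p : R) ∈ Ideal.jacobson (⊥ : Ideal R))
    (hgen : AddGenByUnits R) (K : DennisSteinK2 R) {i : ℕ} (hi : 1 ≤ i) (x y : R) :
    K.ds ((p:R)^i*x) ((p:R)^i*y) ∈ K.V p (i+1) := by
  obtain ⟨n, rfl⟩ : ∃ n, i = n+1 := ⟨i-1, by omega⟩
  have hD3 := K.D3 ((p:R)^(n+1)*x) (p:R) ((p:R)^n*y)
    (isU hjac (show (1:ℕ) ≤ 2*n+2 by omega) (x*y) (by ring))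
  rw [show ((p:R)^(n+1)*x)*(p:R) = (p:R)^(n+2)*x from by ring,
    show ((p:R)^(n+1)*x)*((p:R)^n*y) = (p:R)^(n+1)*((p:R)^n*(x*y)) from by ring] at hD3
  rw [show (p:R)^(n+1)*y = (p:R)*((p:R)^n*y) from by ring, hD3]
  refine add_mem (UleV K _ ?_) ?_
  · exact dsB hjac hgen K (show (1:ℕ) ≤ n+2 by omega) x ((p:R)^n*y) rfl
  · have h := Gmain hp hjac hgen K (n+2) (by omega) ((p:R)^n*(x*y))
    rw [show n+2-1 = n+1 from rfl] at h
    exact h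

lemma stSS (hp : p.Prime) (hjac : (p : R) ∈ Ideal.jacobson (⊥ : Ideal R))
    (hgen : AddGenByUnits R) (K : DennisSteinK2 R) {i : ℕ} (hi : 1 ≤ i) (x y : R) (μ ν : Rˣ)
    (hμ : (μ:R) = 1 + (p:R)^i*x) (hν : (ν:R) = 1 + (p:R)^i*y) :
    K.st μ ν ∈ K.V p (i+1) := by
  have h := stM2 hjac K (j := i) (k := i) hi hi x (-y) μ ν hμ (by rw [hν]; ring)
  have h2 : K.ds ((p:R)^i*x) ((p:R)^i*(-y)) + K.st μ ν ∈ K.V p (i+1) :=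
    UleV K _ (Umono K (by omega) h)
  have h3 := dsPP hp hjac hgen K hi x (-y)
  have h4 := (K.V p (i+1)).sub_mem h2 h3
  rwa [add_sub_cancel_left] at h4

end DSAux


open DSAux

theorem dennisStein_filtration_lemma
    (p : ℕ) (hp : p.Prime) (R : Type) [CommRing R]
    (hjac : (p : R) ∈ Ideal.jacobson (⊥ : Ideal R))
    (hgen : AddGenByUnits R)
    (K : DennisSteinK2 R) (i : ℕ) (hi : 1 ≤ i) :
    -- (i) `{1+apⁱ, 1+bp} ∈ V^{i+1} K₂(R)`:
    (∀ (a b : R) (u v : Rˣ), (u : R) = 1 + (p : R) ^ i * a → (v : R) = 1 + (p : R) * b →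
      K.st u v ∈ K.V p (i + 1)) ∧
    -- (ii) `{1+apⁱ, −1} ∈ V^{i+1} K₂(R)`:
    (∀ (a : R) (u : Rˣ), (u : R) = 1 + (p : R) ^ i * a →
      K.st u (-1) ∈ K.V p (i + 1)) ∧
    -- (iii) `⟨pⁱ⁻¹a, p⟩` and `⟨pⁱ⁻¹, pa⟩` lie in `V^i K₂(R)`:
    (∀ a : R, K.ds ((p : R) ^ (i - 1) * a) (p : R) ∈ K.V p i ∧
      K.ds ((p : R) ^ (i - 1)) ((p : R) * a) ∈ K.V p i) := by
  refine ⟨?_, ?_, ?_⟩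
  · -- (i)
    intro a b u v hu hv
    obtain ⟨w, hw⟩ : IsUnit ((1:R) + (p:R)^i*(a*((v⁻¹:Rˣ):R))) := isU hjac hi _ rfl
    have hvv : ((v⁻¹:Rˣ):R)*(v:R) = 1 := Units.inv_mul v
    have hwv : ((w⁻¹:Rˣ):R)*(w:R) = 1 := Units.inv_mul w
    have hD4 : K.ds ((p:R)^i*(a*((v⁻¹:Rˣ):R))) ((v:Rˣ):R) = K.st u v :=
      K.D4 _ v u (by rw [hu]; linear_combination (-((p:R)^i*a))*hvv)
    have hsplit := K.D2 ((p:R)^i*(a*((v⁻¹:Rˣ):R))) 1 ((p:R)*(b*((w⁻¹:Rˣ):R)))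
      (by rw [mul_one, ← hw]; exact w.isUnit)
      (isU hjac (le_refl 1) ((p:R)^i*(a*((v⁻¹:Rˣ):R))*(b*((w⁻¹:Rˣ):R))) (by ring))
    have harg : (1:R) + (p:R)*(b*((w⁻¹:Rˣ):R))
        + (p:R)^i*(a*((v⁻¹:Rˣ):R))*1*((p:R)*(b*((w⁻¹:Rˣ):R))) = (v:R) := by
      rw [hv]
      linear_combination ((p:R)*b)*hwv - ((p:R)*b*((w⁻¹:Rˣ):R))*hw
    rw [harg] at hsplit
    have hds1 : K.ds ((p:R)^i*(a*((v⁻¹:Rˣ):R))) 1 = 0 := by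
      have h1 : K.ds ((p:R)^i*(a*((v⁻¹:Rˣ):R))) (((1:Rˣ)):R) = K.st w 1 :=
        K.D4 _ 1 w (by rw [hw, Units.val_one, mul_one])
      rw [Units.val_one] at h1
      rw [h1, st_one_right]
    have hD3 := K.D3 ((p:R)^i*(a*((v⁻¹:Rˣ):R))) (p:R) (b*((w⁻¹:Rˣ):R))
      (isU hjac (le_refl 1) ((p:R)^i*(a*((v⁻¹:Rˣ):R))*(b*((w⁻¹:Rˣ):R))) (by ring))
    have m1 : K.ds (((p:R)^i*(a*((v⁻¹:Rˣ):R)))*(p:R)) (b*((w⁻¹:Rˣ):R)) ∈ K.U p (i+1) :=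
      dsB hjac hgen K (show (1:ℕ) ≤ i+1 by omega) (a*((v⁻¹:Rˣ):R)) _ (by ring)
    have m2 : K.ds (((p:R)^i*(a*((v⁻¹:Rˣ):R)))*(b*((w⁻¹:Rˣ):R))) (p:R) ∈ K.V p (i+1) := by
      have h := Gmain hp hjac hgen K (i+1) (by omega) (a*((v⁻¹:Rˣ):R)*(b*((w⁻¹:Rˣ):R)))
      simp only [Nat.add_sub_cancel] at h
      rwa [show ((p:R)^i*(a*((v⁻¹:Rˣ):R)))*(b*((w⁻¹:Rˣ):R))
        = (p:R)^i*(a*((v⁻¹:Rˣ):R)*(b*((w⁻¹:Rˣ):R))) from by ring]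
    rw [← hD4, ← hsplit, hds1, zero_add, hD3]
    exact add_mem (UleV K _ m1) m2
  · -- (ii)
    intro a u hu
    obtain ⟨γ, hγ⟩ : IsUnit ((1:R) + (p:R)^i*(2*a)) := isU hjac hi _ rfl
    have hone2 : IsUnit ((1:R) - 2) := by
      rw [show (1:R)-2 = -1 from by ring]; exact isUnit_one.neg
    have hE1 : K.ds ((p:R)^i*a) 2 = K.st u (-1) + K.st u γ := by
      have hD5 := K.D5 ((p:R)^i*a) 2 u (-γ) hone2
        (by rw [hu]; ring)
        (by rw [Units.val_neg, hγ]; ring)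
      rw [hD5]
      have e : (-1 : Rˣ)*γ = -γ := Units.ext (by simp)
      rw [← e, K.st_mul_right]
    have huu : ((u⁻¹:Rˣ):R)*(u:R) = 1 := Units.inv_mul u
    have humul : (u:R)*((u⁻¹:Rˣ):R) = 1 := Units.mul_inv u
    have he : (1:R) + ((p:R)^i*a)*((u⁻¹:Rˣ):R) = ((γ*u⁻¹ : Rˣ):R) := by
      rw [Units.val_mul, hγ]
      linear_combination (((u⁻¹:Rˣ):R))*hu - huu
    have hsplit2 := K.D2 ((p:R)^i*a) 1 ((u⁻¹:Rˣ):R)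
      (by rw [mul_one, ← hu]; exact u.isUnit)
      (by rw [he]; exact (γ*u⁻¹).isUnit)
    have harg2 : (1:R) + ((u⁻¹:Rˣ):R) + ((p:R)^i*a)*1*((u⁻¹:Rˣ):R) = 2 := by
      linear_combination (-(((u⁻¹:Rˣ):R)))*hu + huu
    rw [harg2] at hsplit2
    have hds1' : K.ds ((p:R)^i*a) 1 = 0 := by
      have h1 : K.ds ((p:R)^i*a) (((1:Rˣ)):R) = K.st u 1 :=
        K.D4 _ 1 u (by rw [hu, Units.val_one, mul_one])
      rw [Units.val_one] at h1
      rw [h1, st_one_right]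
    have hD4' : K.ds ((p:R)^i*a) ((u⁻¹:Rˣ):R) = K.st (γ*u⁻¹) u⁻¹ :=
      K.D4 _ u⁻¹ (γ*u⁻¹) he.symm
    have hE2 : K.ds ((p:R)^i*a) 2 = - K.st γ u + K.st u u := by
      rw [← hsplit2, hds1', zero_add, hD4', K.st_mul_left, st_inv_right K γ u,
        st_inv_left K u u⁻¹, st_inv_right K u u, neg_neg]
    have s1 : K.st γ u ∈ K.V p (i+1) := stSS hp hjac hgen K hi (2*a) a γ u hγ hu
    have s2 : K.st u u ∈ K.V p (i+1) := stSS hp hjac hgen K hi a a u u hu hu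
    have s3 : K.st u γ ∈ K.V p (i+1) := stSS hp hjac hgen K hi a (2*a) u γ hu hγ
    have key : K.st u (-1) = (- K.st γ u + K.st u u) - K.st u γ := by
      have h12 := hE1.symm.trans hE2
      rw [← h12]; abel
    rw [key]
    exact sub_mem (add_mem (neg_mem s1) s2) s3
  · -- (iii)
    intro a
    constructor
    · exact Gmain hp hjac hgen K i hi a
    · obtain ⟨n, rfl⟩ : ∃ n, i = n+1 := ⟨i-1, by omega⟩
      simp only [Nat.add_sub_cancel]
      have hD3 := K.D3 ((p:R)^n) (p:R) a
        (isU hjac (show (1:ℕ) ≤ n+1 by omega) a (by ring))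
      rw [hD3]
      refine add_mem (UleV K _ ?_) ?_
      · exact dsB hjac hgen K (show (1:ℕ) ≤ n+1 by omega) 1 a (by ring)
      · have h := Gmain hp hjac hgen K (n+1) (by omega) a
        simp only [Nat.add_sub_cancel] at h
        exact h
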